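/- Let A, B ⊆ {0,1}^N be finite sets of boolean strings and let R ⊆ A × B be a relation such that every pair (x, y) ∈ R differs in exactly one coordinate, denoted i(x,y). Suppose every x ∈ A has at least m partners y with (x,y) ∈ R, and every y ∈ B has at least m' partners x with (x,y) ∈ R. For each x ∈ A let (α_{x,i})_{i=1}^N be reals with ∑_i α_{x,i}² ≤ 1, and for each y ∈ B let (β_{y,i})_{i=1}^N be reals with ∑_i β_{y,i}² ≤ 1. Then ∑_{(x,y) ∈ R} |α_{x, i(x,y)}| · |β_{y, i(x,y)}| ≤ |R| / √(m m'). -/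

import Mathlib

/-- Adversary progress inequality: if `R ⊆ A × B` relates boolean strings differing in exactly
one coordinate `ι(x,y)`, every `x ∈ A` has at least `m` partners, every `y ∈ B` has at least
`m'` partners, and the amplitude vectors `α_x`, `β_y` have squared ℓ²-norm at most `1`, then
`∑_{(x,y) ∈ R} |α_{x,ι(x,y)}| · |β_{y,ι(x,y)}| ≤ |R| / √(m m')`. -/
theorem stmt_16 {N : ℕ}
    (A B : Finset (Fin N → Bool))
    (R : Finset ((Fin N → Bool) × (Fin N → Bool)))
    (hR : R ⊆ A ×ˢ B)
    (hone : ∀ p ∈ R, (Finset.univ.filter fun i : Fin N => p.1 i ≠ p.2 i).card = 1)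
    (ι : (Fin N → Bool) × (Fin N → Bool) → Fin N)
    (hι : ∀ p ∈ R, p.1 (ι p) ≠ p.2 (ι p))
    (m m' : ℕ) (hm : 0 < m) (hm' : 0 < m')
    (hA : ∀ x ∈ A, m ≤ (R.filter fun p => p.1 = x).card)
    (hB : ∀ y ∈ B, m' ≤ (R.filter fun p => p.2 = y).card)
    (α β : (Fin N → Bool) → Fin N → ℝ)
    (hα : ∀ x ∈ A, ∑ i, α x i ^ 2 ≤ 1)
    (hβ : ∀ y ∈ B, ∑ i, β y i ^ 2 ≤ 1) :
    ∑ p ∈ R, |α p.1 (ι p)| * |β p.2 (ι p)| ≤ (R.card : ℝ) / Real.sqrt ((m : ℝ) * (m' : ℝ)) := by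
  have hm0 : (0:ℝ) < m := by exact_mod_cast hm
  have hm'0 : (0:ℝ) < m' := by exact_mod_cast hm'
  -- the unique differing coordinate determines the other string
  have hstruct : ∀ p ∈ R, ∀ i, p.2 i = if i = ι p then !(p.1 i) else p.1 i := by
    intro p hp i
    obtain ⟨a, ha⟩ := Finset.card_eq_one.mp (hone p hp)
    have hiota : ι p ∈ Finset.univ.filter fun i : Fin N => p.1 i ≠ p.2 i := by
      simp [hι p hp]
    rw [ha, Finset.mem_singleton] at hiota
    by_cases hi : i = ι p
    · subst hi
      have h := hι p hp
      revert h
      cases p.1 (ι p) <;> cases p.2 (ι p) <;> simp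
    · have hni : i ∉ Finset.univ.filter fun i : Fin N => p.1 i ≠ p.2 i := by
        rw [ha, Finset.mem_singleton]
        intro h
        exact hi (h.trans hiota.symm)
      simp only [Finset.mem_filter, Finset.mem_univ, true_and, not_not] at hni
      simp [hi, hni]
  -- injectivity of ι on fibers over first coordinate
  have hinj1 : ∀ x : Fin N → Bool, ∀ p ∈ R.filter (fun p => p.1 = x),
      ∀ q ∈ R.filter (fun p => p.1 = x), ι p = ι q → p = q := by
    intro x p hp q hq hpq
    rw [Finset.mem_filter] at hp hq
    have h2 : p.2 = q.2 := by
      funext i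
      rw [hstruct p hp.1 i, hstruct q hq.1 i, hp.2, hq.2, hpq]
    exact Prod.ext (hp.2.trans hq.2.symm) h2
  have hinj2 : ∀ y : Fin N → Bool, ∀ p ∈ R.filter (fun p => p.2 = y),
      ∀ q ∈ R.filter (fun p => p.2 = y), ι p = ι q → p = q := by
    intro y p hp q hq hpq
    rw [Finset.mem_filter] at hp hq
    have h1 : p.1 = q.1 := by
      funext i
      have hp' := hstruct p hp.1 i
      have hq' := hstruct q hq.1 i
      rw [hp.2] at hp'
      rw [hq.2] at hq'
      by_cases hi : i = ι p
      · subst hi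
        rw [hpq] at hp' hq' ⊢
        rw [if_pos rfl] at hp' hq'
        have hb : (!p.1 (ι q)) = (!q.1 (ι q)) := hp'.symm.trans hq'
        simpa using hb
      · rw [if_neg hi] at hp'
        rw [← hpq] at hq'
        rw [if_neg hi] at hq'
        rw [← hp', ← hq']
    exact Prod.ext h1 (hp.2.trans hq.2.symm)
  -- fiberwise sum bounds
  have hmapsA : ∀ p ∈ R, p.1 ∈ A := fun p hp => (Finset.mem_product.mp (hR hp)).1
  have hmapsB : ∀ p ∈ R, p.2 ∈ B := fun p hp => (Finset.mem_product.mp (hR hp)).2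
  have SA : ∑ p ∈ R, α p.1 (ι p) ^ 2 ≤ (A.card : ℝ) := by
    rw [← Finset.sum_fiberwise_of_maps_to hmapsA (fun p => α p.1 (ι p) ^ 2)]
    calc ∑ x ∈ A, ∑ p ∈ R.filter (fun p => p.1 = x), α p.1 (ι p) ^ 2
        ≤ ∑ x ∈ A, (1:ℝ) := by
          apply Finset.sum_le_sum
          intro x hx
          have : ∑ p ∈ R.filter (fun p => p.1 = x), α p.1 (ι p) ^ 2
              = ∑ i ∈ (R.filter (fun p => p.1 = x)).image ι, α x i ^ 2 := by
            rw [Finset.sum_image (hinj1 x)]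
            apply Finset.sum_congr rfl
            intro p hp
            rw [(Finset.mem_filter.mp hp).2]
          rw [this]
          calc ∑ i ∈ (R.filter (fun p => p.1 = x)).image ι, α x i ^ 2
              ≤ ∑ i, α x i ^ 2 := Finset.sum_le_sum_of_subset_of_nonneg
                (Finset.subset_univ _) (fun i _ _ => sq_nonneg _)
            _ ≤ 1 := hα x hx
      _ = (A.card : ℝ) := by simp
  have SB : ∑ p ∈ R, β p.2 (ι p) ^ 2 ≤ (B.card : ℝ) := by
    rw [← Finset.sum_fiberwise_of_maps_to hmapsB (fun p => β p.2 (ι p) ^ 2)]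
    calc ∑ y ∈ B, ∑ p ∈ R.filter (fun p => p.2 = y), β p.2 (ι p) ^ 2
        ≤ ∑ y ∈ B, (1:ℝ) := by
          apply Finset.sum_le_sum
          intro y hy
          have : ∑ p ∈ R.filter (fun p => p.2 = y), β p.2 (ι p) ^ 2
              = ∑ i ∈ (R.filter (fun p => p.2 = y)).image ι, β y i ^ 2 := by
            rw [Finset.sum_image (hinj2 y)]
            apply Finset.sum_congr rfl
            intro p hp
            rw [(Finset.mem_filter.mp hp).2]
          rw [this]
          calc ∑ i ∈ (R.filter (fun p => p.2 = y)).image ι, β y i ^ 2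
              ≤ ∑ i, β y i ^ 2 := Finset.sum_le_sum_of_subset_of_nonneg
                (Finset.subset_univ _) (fun i _ _ => sq_nonneg _)
            _ ≤ 1 := hβ y hy
      _ = (B.card : ℝ) := by simp
  -- counting: m * |A| ≤ |R| and m' * |B| ≤ |R|
  have hAcard : m * A.card ≤ R.card := by
    rw [Finset.card_eq_sum_card_fiberwise hmapsA]
    calc m * A.card = ∑ _x ∈ A, m := by rw [Finset.sum_const, smul_eq_mul, mul_comm]
      _ ≤ ∑ x ∈ A, (R.filter (fun p => p.1 = x)).card := Finset.sum_le_sum hA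
  have hBcard : m' * B.card ≤ R.card := by
    rw [Finset.card_eq_sum_card_fiberwise hmapsB]
    calc m' * B.card = ∑ _y ∈ B, m' := by rw [Finset.sum_const, smul_eq_mul, mul_comm]
      _ ≤ ∑ y ∈ B, (R.filter (fun p => p.2 = y)).card := Finset.sum_le_sum hB
  have hAcardR : (A.card : ℝ) ≤ (R.card : ℝ) / m := by
    rw [le_div_iff₀ hm0]
    have : ((m * A.card : ℕ) : ℝ) ≤ (R.card : ℝ) := by exact_mod_cast hAcard
    push_cast at this
    linarith
  have hBcardR : (B.card : ℝ) ≤ (R.card : ℝ) / m' := by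
    rw [le_div_iff₀ hm'0]
    have : ((m' * B.card : ℕ) : ℝ) ≤ (R.card : ℝ) := by exact_mod_cast hBcard
    push_cast at this
    linarith
  -- weighted AM-GM
  set c : ℝ := Real.sqrt ((m:ℝ) / m') with hc_def
  have hc : 0 < c := Real.sqrt_pos.mpr (div_pos hm0 hm'0)
  have hci : 0 < c⁻¹ := inv_pos.mpr hc
  have hcc : c * c⁻¹ = 1 := mul_inv_cancel₀ (ne_of_gt hc)
  have pointwise : ∀ p ∈ R, |α p.1 (ι p)| * |β p.2 (ι p)|
      ≤ (c * α p.1 (ι p) ^ 2 + c⁻¹ * β p.2 (ι p) ^ 2) / 2 := by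
    intro p _
    set a := α p.1 (ι p)
    set b := β p.2 (ι p)
    set s := Real.sqrt c with hs_def
    have hs : 0 < s := Real.sqrt_pos.mpr hc
    have hss : s * s = c := Real.mul_self_sqrt hc.le
    have hs0 : s ≠ 0 := ne_of_gt hs
    have h2 : 2 * (s * |a|) * (s⁻¹ * |b|) ≤ (s * |a|) ^ 2 + (s⁻¹ * |b|) ^ 2 :=
      two_mul_le_add_sq _ _
    have e1 : 2 * (s * |a|) * (s⁻¹ * |b|) = 2 * (|a| * |b|) := by
      field_simp
    have e2 : (s * |a|) ^ 2 = c * a ^ 2 := by rw [mul_pow, sq_abs, ← hss]; ring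
    have e3 : (s⁻¹ * |b|) ^ 2 = c⁻¹ * b ^ 2 := by
      rw [mul_pow, sq_abs, ← hss, mul_inv]; ring
    rw [e1, e2, e3] at h2
    linarith
  -- key conversion equalities
  have hms : Real.sqrt ((m:ℝ) * m') = Real.sqrt m * Real.sqrt m' := Real.sqrt_mul hm0.le _
  have hsm : (0:ℝ) < Real.sqrt m := Real.sqrt_pos.mpr hm0
  have hsm' : (0:ℝ) < Real.sqrt m' := Real.sqrt_pos.mpr hm'0
  have hc_eq : c = Real.sqrt m / Real.sqrt m' := Real.sqrt_div hm0.le _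
  have hmm : Real.sqrt m * Real.sqrt m = m := Real.mul_self_sqrt hm0.le
  have hmm' : Real.sqrt m' * Real.sqrt m' = m' := Real.mul_self_sqrt hm'0.le
  have key1 : c * ((R.card : ℝ) / m) = (R.card : ℝ) / Real.sqrt ((m:ℝ) * m') := by
    rw [hc_eq, hms]
    field_simp
    linear_combination (R.card : ℝ) * hmm
  have key2 : c⁻¹ * ((R.card : ℝ) / m') = (R.card : ℝ) / Real.sqrt ((m:ℝ) * m') := by
    rw [hc_eq, hms]
    field_simp
    linear_combination (R.card : ℝ) * hmm'
  calc ∑ p ∈ R, |α p.1 (ι p)| * |β p.2 (ι p)|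
      ≤ ∑ p ∈ R, (c * α p.1 (ι p) ^ 2 + c⁻¹ * β p.2 (ι p) ^ 2) / 2 :=
        Finset.sum_le_sum pointwise
    _ = (c * ∑ p ∈ R, α p.1 (ι p) ^ 2 + c⁻¹ * ∑ p ∈ R, β p.2 (ι p) ^ 2) / 2 := by
        rw [Finset.mul_sum, Finset.mul_sum, ← Finset.sum_add_distrib, Finset.sum_div]
    _ ≤ (c * ((R.card : ℝ) / m) + c⁻¹ * ((R.card : ℝ) / m')) / 2 := by
        have h1 : c * ∑ p ∈ R, α p.1 (ι p) ^ 2 ≤ c * ((R.card : ℝ) / m) :=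
          mul_le_mul_of_nonneg_left (SA.trans hAcardR) hc.le
        have h2 : c⁻¹ * ∑ p ∈ R, β p.2 (ι p) ^ 2 ≤ c⁻¹ * ((R.card : ℝ) / m') :=
          mul_le_mul_of_nonneg_left (SB.trans hBcardR) hci.le
        linarith
    _ = (R.card : ℝ) / Real.sqrt ((m:ℝ) * m') := by rw [key1, key2]; ring
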